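/- With B as above, if w = (w̃, b) ∈ ℕB satisfies |w̃| = 2b (sum of entries of w̃ equals 2b), then w is a nonnegative integer combination of the vectors (v₁,1), …, (v_q,1) alone. -/

import Mathlib

/-- The set `B = {(e₁,1),…,(e_n,1)} ∪ {(v,1) : v edge characteristic vector} ∪ {e_{n+1}}`
inside `ℕⁿ × ℕ`. -/
def graphGenSet (n : ℕ) (G : SimpleGraph (Fin n)) : Set ((Fin n → ℕ) × ℕ) :=
  {p | ∃ i : Fin n, p = (Pi.single i 1, 1)} ∪
  {p | ∃ a b : Fin n, G.Adj a b ∧ p = (Pi.single a 1 + Pi.single b 1, 1)} ∪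
  {((0 : Fin n → ℕ), 1)}

/-- The defect homomorphism `w ↦ 2·w.2 - Σᵢ w.1 i` into `ℤ`. -/
def defectHom (n : ℕ) : ((Fin n → ℕ) × ℕ) →+ ℤ where
  toFun w := 2 * (w.2 : ℤ) - ∑ i : Fin n, (w.1 i : ℤ)
  map_zero' := by simp
  map_add' a b := by
    simp only [Prod.snd_add, Prod.fst_add, Pi.add_apply]
    push_cast
    rw [Finset.sum_add_distrib]
    ring

/-- If `w = (w̃, b) ∈ ℕB` with `|w̃| = 2b`, then `w` is a nonnegative integer combination
of the vectors `(v₁,1), …, (v_q,1)` alone. -/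
theorem mem_edge_submonoid_of_sum_eq_two_mul (n : ℕ) (G : SimpleGraph (Fin n))
    (w : (Fin n → ℕ) × ℕ) (hw : w ∈ AddSubmonoid.closure (graphGenSet n G))
    (hsum : ∑ i : Fin n, w.1 i = 2 * w.2) :
    w ∈ AddSubmonoid.closure
      {p : (Fin n → ℕ) × ℕ | ∃ a b : Fin n, G.Adj a b ∧ p = (Pi.single a 1 + Pi.single b 1, 1)} := by
  set E : Set ((Fin n → ℕ) × ℕ) :=
    {p | ∃ a b : Fin n, G.Adj a b ∧ p = (Pi.single a 1 + Pi.single b 1, 1)} with hE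
  set φ := defectHom n with hφ
  have key : ∀ x ∈ AddSubmonoid.closure (graphGenSet n G),
      0 ≤ φ x ∧ (φ x = 0 → x ∈ AddSubmonoid.closure E) := by
    intro x hx
    induction hx using AddSubmonoid.closure_induction with
    | mem p hp =>
      rcases hp with (⟨i, rfl⟩ | ⟨a, b, hab, rfl⟩) | hp
      · have h1 : φ (Pi.single i 1, 1) = 1 := by
          simp only [hφ, defectHom, AddMonoidHom.coe_mk, ZeroHom.coe_mk]
          simp [Pi.single_apply, Finset.sum_ite_eq']
        rw [h1]
        exact ⟨by norm_num, by norm_num⟩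
      · have h1 : φ (Pi.single a 1 + Pi.single b 1, 1) = 0 := by
          simp only [hφ, defectHom, AddMonoidHom.coe_mk, ZeroHom.coe_mk]
          simp [Pi.single_apply, Finset.sum_add_distrib, Finset.sum_ite_eq']
        rw [h1]
        refine ⟨le_refl _, fun _ => AddSubmonoid.subset_closure ?_⟩
        exact ⟨a, b, hab, rfl⟩
      · rcases hp with rfl
        have h1 : φ ((0 : Fin n → ℕ), 1) = 2 := by
          simp only [hφ, defectHom, AddMonoidHom.coe_mk, ZeroHom.coe_mk]
          simp
        rw [h1]
        exact ⟨by norm_num, by norm_num⟩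
    | zero => exact ⟨by simp, fun _ => AddSubmonoid.zero_mem _⟩
    | add a b _ _ iha ihb =>
      refine ⟨by rw [map_add]; exact add_nonneg iha.1 ihb.1, fun h => ?_⟩
      rw [map_add] at h
      have ha0 : φ a = 0 := le_antisymm (by linarith [ihb.1]) iha.1
      have hb0 : φ b = 0 := le_antisymm (by linarith [iha.1]) ihb.1
      exact AddSubmonoid.add_mem _ (iha.2 ha0) (ihb.2 hb0)
  have hφw : φ w = 0 := by
    simp only [hφ, defectHom, AddMonoidHom.coe_mk, ZeroHom.coe_mk]
    rw [← Nat.cast_sum, hsum]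
    push_cast
    ring
  exact (key w hw).2 hφw
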